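/- arXiv:1610.00526 — 2 statements merged into one kernel-verified Lean document; each statement's English description precedes it below -/
import Mathlib

section
/- Given reals ρ₀ ≠ 0 and ρ₁, ρ₂, …, set x_r := −(2r+1)!!·ρ_r/((r+1)·ρ₀), and for integers B ≥ 3 and 0 ≤ M ≤ B−3 define γ^M_B := ρ₀^{−(B−3)}·Σ_{K=0}^{B−3−M} ((B−3+K)!/((B−3−M)!·M!))·B_{B−3−M,K}(x₁,…,x_{B−2−M−K}); set γ^M_B := 0 when M < 0 or M > B−3. Then for every B ≥ 4 and every 0 ≤ M ≤ B−4: Σ_{j=0}^{B−4−M} C(M+1+j, j+1)·(2j+3)!!·ρ_j·γ^{M+1+j}_B = (2M+B−1)·γ^M_{B−1}, where C(·,·) is the binomial coefficient and (2j+3)!! := (2j+3)!/(2^{j+1}·(j+1)!). -/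
open Finset


/-- The partial Bell polynomial `B_{n,k}(x₁,…,x_{n−k+1})`, defined by the explicit sum
`Σ n!/(j₁!⋯j_{n−k+1}!)·∏ᵢ(xᵢ/i!)^{jᵢ}` over nonnegative integers `j₁,…,j_{n−k+1}` with
`j₁+⋯+j_{n−k+1} = k` and `1j₁+2j₂+⋯+(n−k+1)j_{n−k+1} = n`. -/
noncomputable def bellPoly (n k : ℕ) (x : ℕ → ℝ) : ℝ :=
  ∑ j ∈ (Finset.Nat.antidiagonalTuple (n - k + 1) k).filter
      (fun j : Fin (n - k + 1) → ℕ => ∑ i : Fin (n - k + 1), ((i : ℕ) + 1) * j i = n),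
    (n.factorial : ℝ) / (∏ i : Fin (n - k + 1), ((j i).factorial : ℝ)) *
      ∏ i : Fin (n - k + 1), (x ((i : ℕ) + 1) / (((i : ℕ) + 1).factorial : ℝ)) ^ (j i)

/-- The odd double factorial `(2j+1)!! = (2j+1)!/(2^j·j!)` as a real number. -/
noncomputable def df (j : ℕ) : ℝ := ((2 * j + 1).factorial : ℝ) / (2 ^ j * (j.factorial : ℝ))

/-- The coefficients `γ^M_B` built from a sequence `ρ₀, ρ₁, …`:
`γ^M_B = ρ₀^{−(B−3)}·Σ_{K=0}^{B−3−M} ((B−3+K)!/((B−3−M)!·M!))·B_{B−3−M,K}(x₁,…)` with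
`x_r = −(2r+1)!!·ρ_r/((r+1)·ρ₀)`, for `B ≥ 3` and `0 ≤ M ≤ B−3`, and `γ^M_B = 0`
for `M` out of this range. -/
noncomputable def gam (ρs : ℕ → ℝ) (B : ℕ) (M : ℤ) : ℝ :=
  if 3 ≤ B ∧ 0 ≤ M ∧ M ≤ (B : ℤ) - 3 then
    (ρs 0 ^ (B - 3))⁻¹ *
      ∑ K ∈ Finset.range (B - 3 - M.toNat + 1),
        ((B - 3 + K).factorial : ℝ) /
            (((B - 3 - M.toNat).factorial : ℝ) * (M.toNat.factorial : ℝ)) *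
          bellPoly (B - 3 - M.toNat) K (fun r => -(df r * ρs r) / ((r + 1) * ρs 0))
  else 0

namespace BA
def A (L n k : ℕ) : Finset (Fin L → ℕ) :=
  (Finset.Nat.antidiagonalTuple L k).filter
    (fun j : Fin L → ℕ => ∑ i : Fin L, ((i : ℕ) + 1) * j i = n)

noncomputable def tm (L : ℕ) (n : ℕ) (x : ℕ → ℝ) (j : Fin L → ℕ) : ℝ :=
  (n.factorial : ℝ) / (∏ i : Fin L, ((j i).factorial : ℝ)) *
    ∏ i : Fin L, (x ((i : ℕ) + 1) / (((i : ℕ) + 1).factorial : ℝ)) ^ (j i)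

noncomputable def bell2 (L n k : ℕ) (x : ℕ → ℝ) : ℝ := ∑ j ∈ A L n k, tm L n x j

lemma mem_A {L n k : ℕ} {j : Fin L → ℕ} :
    j ∈ A L n k ↔ (∑ i : Fin L, j i = k) ∧ (∑ i : Fin L, ((i : ℕ) + 1) * j i = n) := by
  simp [A, Finset.Nat.mem_antidiagonalTuple]

lemma bellPoly_eq_bell2_dim (n k : ℕ) (x : ℕ → ℝ) :
    bellPoly n k x = bell2 (n - k + 1) n k x := rfl

lemma wt_ge_sz {L : ℕ} (j : Fin L → ℕ) :
    ∑ i : Fin L, j i ≤ ∑ i : Fin L, ((i : ℕ) + 1) * j i :=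
  Finset.sum_le_sum (fun i _ => by nlinarith [Nat.zero_le ((i:ℕ) * j i)])

lemma bell2_eq_zero {L n k : ℕ} (h : n < k) (x : ℕ → ℝ) : bell2 L n k x = 0 := by
  rw [bell2]
  apply Finset.sum_eq_zero
  intro j hj
  obtain ⟨h1, h2⟩ := mem_A.mp hj
  exact absurd (h1 ▸ h2 ▸ wt_ge_sz j) (by omega)

lemma support_lemma {L n k : ℕ} {j : Fin L → ℕ} (hj : j ∈ A L n k)
    {i : Fin L} (hi : n - k + 1 ≤ (i : ℕ)) : j i = 0 := by
  obtain ⟨h1, h2⟩ := mem_A.mp hj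
  by_contra h0
  have hji : 1 ≤ j i := Nat.one_le_iff_ne_zero.mpr h0
  have hsplit : ∑ l : Fin L, ((l : ℕ) + 1) * j l
      = (∑ l : Fin L, (l : ℕ) * j l) + ∑ l : Fin L, j l := by
    rw [← Finset.sum_add_distrib]; exact Finset.sum_congr rfl fun l _ => by ring
  have hone : (i : ℕ) * j i ≤ ∑ l : Fin L, (l : ℕ) * j l :=
    Finset.single_le_sum (f := fun l : Fin L => (l : ℕ) * j l) (fun l _ => Nat.zero_le _) (Finset.mem_univ i)
  have : (i : ℕ) ≤ (i : ℕ) * j i := Nat.le_mul_of_pos_right _ hji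
  omega

variable {L L' : ℕ}

lemma sum_restrict {M : Type*} [AddCommMonoid M] (h : L ≤ L') (f : Fin L' → M)
    (hf : ∀ i : Fin L', L ≤ (i : ℕ) → f i = 0) :
    ∑ i : Fin L', f i = ∑ i : Fin L, f (Fin.castLE h i) := by
  have h1 : ∑ i : Fin L', f i = ∑ i ∈ Finset.univ.map (Fin.castLEEmb h), f i := by
    apply (Finset.sum_subset (Finset.subset_univ _) _).symm
    intro i _ hi
    apply hf
    by_contra hc
    push_neg at hc
    exact hi (Finset.mem_map.mpr ⟨⟨(i:ℕ), hc⟩, Finset.mem_univ _, by ext; simp⟩)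
  rw [h1, Finset.sum_map]
  rfl

lemma prod_restrict {M : Type*} [CommMonoid M] (h : L ≤ L') (f : Fin L' → M)
    (hf : ∀ i : Fin L', L ≤ (i : ℕ) → f i = 1) :
    ∏ i : Fin L', f i = ∏ i : Fin L, f (Fin.castLE h i) := by
  have h1 : ∏ i : Fin L', f i = ∏ i ∈ Finset.univ.map (Fin.castLEEmb h), f i := by
    apply (Finset.prod_subset (Finset.subset_univ _) _).symm
    intro i _ hi
    apply hf
    by_contra hc
    push_neg at hc
    exact hi (Finset.mem_map.mpr ⟨⟨(i:ℕ), hc⟩, Finset.mem_univ _, by ext; simp⟩)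
  rw [h1, Finset.prod_map]
  rfl

/-- zero-extension of a tuple -/
def ext (h : L ≤ L') (j : Fin L → ℕ) : Fin L' → ℕ :=
  fun i => if hi : (i : ℕ) < L then j ⟨i, hi⟩ else 0

lemma ext_castLE (h : L ≤ L') (j : Fin L → ℕ) (i : Fin L) :
    ext h j (Fin.castLE h i) = j i := by
  simp [ext, i.isLt]

lemma ext_zero (h : L ≤ L') (j : Fin L → ℕ) (i : Fin L') (hi : L ≤ (i : ℕ)) :
    ext h j i = 0 := by
  simp [ext, Nat.not_lt.mpr hi]

lemma bell2_ext {n k : ℕ} (hL : n - k + 1 ≤ L) (h : L ≤ L') (x : ℕ → ℝ) :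
    bell2 L' n k x = bell2 L n k x := by
  rw [bell2, bell2]
  apply Finset.sum_nbij' (fun j => j ∘ Fin.castLE h) (ext h)
  · -- restrict maps A L' into A L
    intro j hj
    have hz : ∀ i : Fin L', L ≤ (i : ℕ) → j i = 0 := fun i hi =>
      support_lemma hj (le_trans hL hi)
    obtain ⟨h1, h2⟩ := mem_A.mp hj
    refine mem_A.mpr ⟨?_, ?_⟩
    · rw [← h1, sum_restrict h j hz]
      rfl
    · rw [← h2, sum_restrict h (fun i => ((i:ℕ)+1) * j i)
        (fun i hi => by simp [hz i hi])]
      exact Finset.sum_congr rfl fun i _ => by simp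
  · -- ext maps A L into A L'
    intro j hj
    obtain ⟨h1, h2⟩ := mem_A.mp hj
    refine mem_A.mpr ⟨?_, ?_⟩
    · rw [sum_restrict h (ext h j) (ext_zero h j)]
      simpa only [ext_castLE] using h1
    · rw [sum_restrict h (fun i => ((i:ℕ)+1) * ext h j i)
        (fun i hi => by simp [ext_zero h j i hi])]
      rw [← h2]
      exact Finset.sum_congr rfl fun i _ => by simp [ext_castLE]
  · -- left inverse
    intro j hj
    funext i
    by_cases hi : (i : ℕ) < L
    · have hieq : i = Fin.castLE h ⟨(i:ℕ), hi⟩ := by ext; rfl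
      rw [hieq, ext_castLE]
      rfl
    · rw [ext_zero h _ i (Nat.not_lt.mp hi),
        (support_lemma hj (le_trans hL (Nat.not_lt.mp hi)) : j i = 0)]
  · -- right inverse
    intro j _
    funext i
    simp only [Function.comp_apply]
    rw [show Fin.castLE h i = (⟨(i:ℕ), i.isLt.trans_le h⟩ : Fin L') from rfl]
    simp [ext, i.isLt]
  · -- terms agree
    intro j hj
    have hz : ∀ i : Fin L', L ≤ (i : ℕ) → j i = 0 := fun i hi =>
      support_lemma hj (le_trans hL hi)
    rw [tm, tm]
    congr 1
    · congr 1
      rw [prod_restrict h (fun i => ((j i).factorial : ℝ))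
        (fun i hi => by simp [hz i hi])]
      rfl
    · rw [prod_restrict h (fun i => (x ((i:ℕ)+1) / (((i:ℕ)+1).factorial : ℝ)) ^ (j i))
        (fun i hi => by simp [hz i hi])]
      exact Finset.prod_congr rfl fun i _ => by simp

lemma bellPoly_eq_bell2 {n k : ℕ} (hL : n - k + 1 ≤ L) (x : ℕ → ℝ) :
    bellPoly n k x = bell2 L n k x := by
  rw [bellPoly_eq_bell2_dim, bell2_ext (le_refl _) hL]

variable {L₀ : ℕ}

def sing {m : ℕ} (i : Fin m) : Fin m → ℕ := Pi.single i 1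

@[simp] lemma sing_same {m : ℕ} (i : Fin m) : sing i i = 1 := Pi.single_eq_same i 1

lemma sing_ne {m : ℕ} {i l : Fin m} (hl : l ≠ i) : sing i l = 0 := Pi.single_eq_of_ne hl 1

lemma sz_add_single (i : Fin L₀) (j : Fin L₀ → ℕ) :
    ∑ l : Fin L₀, (j l + sing i l) = (∑ l : Fin L₀, j l) + 1 := by
  simp only [sing]
  rw [Finset.sum_add_distrib, Finset.sum_pi_single']
  simp

lemma wt_add_single (i : Fin L₀) (j : Fin L₀ → ℕ) :
    ∑ l : Fin L₀, ((l:ℕ)+1) * (j l + sing i l)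
      = (∑ l : Fin L₀, ((l:ℕ)+1) * j l) + ((i:ℕ)+1) := by
  have h : ∀ l : Fin L₀, ((l:ℕ)+1) * (j l + sing i l)
      = ((l:ℕ)+1) * j l + ((l:ℕ)+1) * sing i l := fun l => by ring
  rw [Finset.sum_congr rfl (fun l _ => h l), Finset.sum_add_distrib]
  congr 1
  rw [Finset.sum_eq_single_of_mem i (Finset.mem_univ i)]
  · simp
  · intro l _ hl
    simp [sing_ne hl]

lemma prod_fact_add_single (i : Fin L₀) (j : Fin L₀ → ℕ) :
    ∏ l : Fin L₀, (((j l + sing i l)).factorial : ℝ)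
      = ((j i : ℝ) + 1) * ∏ l : Fin L₀, ((j l).factorial : ℝ) := by
  rw [← Finset.mul_prod_erase univ
      (fun l => ((j l + sing i l).factorial : ℝ)) (Finset.mem_univ i),
    ← Finset.mul_prod_erase univ (fun l => ((j l).factorial : ℝ)) (Finset.mem_univ i)]
  have he : ∏ l ∈ univ.erase i, ((j l + sing i l).factorial : ℝ)
      = ∏ l ∈ univ.erase i, ((j l).factorial : ℝ) := by
    apply Finset.prod_congr rfl
    intro l hl
    simp [sing_ne (Finset.ne_of_mem_erase hl)]
  rw [he]
  simp only [sing_same]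
  rw [Nat.factorial_succ]
  push_cast
  ring

lemma prod_pow_add_single (i : Fin L₀) (j : Fin L₀ → ℕ) (y : Fin L₀ → ℝ) :
    ∏ l : Fin L₀, (y l) ^ (j l + sing i l)
      = y i * ∏ l : Fin L₀, (y l) ^ (j l) := by
  rw [← Finset.mul_prod_erase univ (fun l => (y l) ^ (j l + sing i l)) (Finset.mem_univ i),
    ← Finset.mul_prod_erase univ (fun l => (y l) ^ (j l)) (Finset.mem_univ i)]
  have he : ∏ l ∈ univ.erase i, (y l) ^ (j l + sing i l)
      = ∏ l ∈ univ.erase i, (y l) ^ (j l) := by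
    apply Finset.prod_congr rfl
    intro l hl
    simp [sing_ne (Finset.ne_of_mem_erase hl)]
  rw [he]
  simp only [sing_same]
  rw [pow_succ]
  ring

lemma core_i (L n K : ℕ) (x : ℕ → ℝ) (i : Fin L) :
    ∑ j ∈ A L n (K+1), (j i : ℝ) * tm L n x j
    = (n.choose ((i:ℕ)+1) : ℝ) * x ((i:ℕ)+1) * bell2 L (n - ((i:ℕ)+1)) K x := by
  by_cases hin : n < (i:ℕ) + 1
  · rw [Nat.choose_eq_zero_of_lt hin]
    rw [Finset.sum_eq_zero]
    · simp
    · intro j hj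
      obtain ⟨h1, h2⟩ := mem_A.mp hj
      have hle : ((i:ℕ)+1) * j i ≤ n := h2 ▸
        Finset.single_le_sum (f := fun l : Fin L => ((l:ℕ)+1) * j l)
          (fun l _ => Nat.zero_le _) (Finset.mem_univ i)
      have : j i = 0 := by
        by_contra h0
        have : 1 ≤ j i := Nat.one_le_iff_ne_zero.mpr h0
        nlinarith
      rw [this]
      simp
  · push_neg at hin
    set p := n - ((i:ℕ)+1) with hp
    have hpn : p + ((i:ℕ)+1) = n := by omega
    rw [← Finset.sum_filter_of_ne (p := fun j : Fin L → ℕ => j i ≠ 0)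
      (fun j _ hne hz => hne (by rw [hz]; simp))]
    rw [bell2, Finset.mul_sum]
    apply (Finset.sum_nbij' (fun j' => fun l => j' l + sing i l)
      (fun j => fun l => j l - sing i l) ?_ ?_ ?_ ?_ ?_).symm
    · -- maps into filter
      intro j' hj'
      obtain ⟨h1, h2⟩ := mem_A.mp hj'
      refine Finset.mem_filter.mpr ⟨mem_A.mpr ⟨?_, ?_⟩, ?_⟩
      · rw [sz_add_single, h1]
      · rw [wt_add_single, h2, hpn]
      · simp
    · -- maps back
      intro j hj
      obtain ⟨hjA, hji⟩ := Finset.mem_filter.mp hj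
      obtain ⟨h1, h2⟩ := mem_A.mp hjA
      have hji1 : 1 ≤ j i := Nat.one_le_iff_ne_zero.mpr hji
      have hrecon : ∀ l, (j l - sing i l) + sing i l = j l := by
        intro l
        by_cases hl : l = i
        · subst hl; simp; omega
        · simp [sing_ne hl]
      have e1 := sz_add_single i (fun l => j l - sing i l)
      have e2 := wt_add_single i (fun l => j l - sing i l)
      simp only [hrecon] at e1 e2
      refine mem_A.mpr ⟨?_, ?_⟩
      · show ∑ l : Fin L, (j l - sing i l) = K
        omega
      · show ∑ l : Fin L, ((l:ℕ)+1) * (j l - sing i l) = p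
        omega
    · -- left inverse
      intro j' _
      funext l
      simp
    · -- right inverse
      intro j hj
      obtain ⟨_, hji⟩ := Finset.mem_filter.mp hj
      have hji1 : 1 ≤ j i := Nat.one_le_iff_ne_zero.mpr hji
      funext l
      by_cases hl : l = i
      · subst hl; simp; omega
      · simp [sing_ne hl]
    · -- term identity
      intro j' hj'
      simp only
      rw [tm, tm]
      have hfac : (n.factorial : ℝ) = (n.choose ((i:ℕ)+1) : ℝ) * (((i:ℕ)+1).factorial : ℝ) * (p.factorial : ℝ) := by
        rw [hp]
        exact_mod_cast (Nat.choose_mul_factorial_mul_factorial hin).symm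
      rw [prod_fact_add_single, prod_pow_add_single, hfac]
      simp only [sing_same]
      have h1 : (0:ℝ) < ∏ l : Fin L, ((j' l).factorial : ℝ) :=
        Finset.prod_pos fun l _ => by positivity
      have h2 : ((j' i : ℝ) + 1) ≠ 0 := by positivity
      have h3 : (((i:ℕ)+1).factorial : ℝ) ≠ 0 := by positivity
      field_simp
      push_cast; ring

lemma core (L n K : ℕ) (x : ℕ → ℝ) (c : ℕ → ℝ) :
    ∑ i : Fin L, c ((i:ℕ)+1) * (n.choose ((i:ℕ)+1) : ℝ) * x ((i:ℕ)+1) * bell2 L (n - ((i:ℕ)+1)) K x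
    = ∑ j ∈ A L n (K+1), (∑ i : Fin L, c ((i:ℕ)+1) * (j i : ℝ)) * tm L n x j := by
  have : ∀ j ∈ A L n (K+1), (∑ i : Fin L, c ((i:ℕ)+1) * (j i : ℝ)) * tm L n x j
      = ∑ i : Fin L, c ((i:ℕ)+1) * ((j i : ℝ) * tm L n x j) := by
    intro j _
    rw [Finset.sum_mul]
    exact Finset.sum_congr rfl fun i _ => by ring
  rw [Finset.sum_congr rfl this, Finset.sum_comm]
  apply Finset.sum_congr rfl
  intro i _
  rw [← Finset.mul_sum, core_i]
  ring

lemma bell2_n0 {L n : ℕ} (hn : 0 < n) (x : ℕ → ℝ) : bell2 L n 0 x = 0 := by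
  rw [bell2]
  apply Finset.sum_eq_zero
  intro j hj
  obtain ⟨h1, h2⟩ := mem_A.mp hj
  have hz : ∀ i : Fin L, j i = 0 := fun i =>
    (Finset.sum_eq_zero_iff.mp h1) i (Finset.mem_univ i)
  rw [Finset.sum_eq_zero (fun i _ => by rw [hz i, mul_zero])] at h2
  omega

lemma keyK (L n K : ℕ) (x : ℕ → ℝ) :
    ∑ i : Fin L, (2*((i:ℕ):ℝ)+5) * (n.choose ((i:ℕ)+1) : ℝ) * x ((i:ℕ)+1) *
        bell2 L (n - ((i:ℕ)+1)) K x
    = (2*(n:ℝ) + 3*(K:ℝ) + 3) * bell2 L n (K+1) x := by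
  have h := core L n K x (fun r => 2*(r:ℝ)+3)
  have hL : ∑ i : Fin L, (2*((i:ℕ):ℝ)+5) * (n.choose ((i:ℕ)+1) : ℝ) * x ((i:ℕ)+1) *
        bell2 L (n - ((i:ℕ)+1)) K x
      = ∑ i : Fin L, (2*((((i:ℕ)+1 : ℕ)):ℝ)+3) * (n.choose ((i:ℕ)+1) : ℝ) * x ((i:ℕ)+1) *
        bell2 L (n - ((i:ℕ)+1)) K x := by
    apply Finset.sum_congr rfl
    intro i _
    push_cast
    ring
  rw [hL, h, bell2, Finset.mul_sum]
  apply Finset.sum_congr rfl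
  intro j hj
  obtain ⟨h1, h2⟩ := mem_A.mp hj
  have hnat : ∑ i : Fin L, (2*((i:ℕ)+1)+3) * j i = 2*n+3*K+3 := by
    have hterm : ∀ i : Fin L, (2*((i:ℕ)+1)+3) * j i
        = 2*(((i:ℕ)+1) * j i) + 3 * j i := fun i => by ring
    rw [Finset.sum_congr rfl (fun i _ => hterm i), Finset.sum_add_distrib,
      ← Finset.mul_sum, ← Finset.mul_sum, h1, h2]
    ring
  have hcast : ∑ i : Fin L, (2*((((i:ℕ)+1 : ℕ)):ℝ)+3) * ((j i : ℕ) : ℝ)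
      = 2*(n:ℝ)+3*(K:ℝ)+3 := by
    exact_mod_cast congrArg (fun t : ℕ => (t : ℝ)) hnat
  rw [hcast]

lemma claimE (n M : ℕ) (x : ℕ → ℝ) :
    ∑ r ∈ Finset.range n, (2*(r:ℝ)+5) * (n.choose (r+1) : ℝ) * x (r+1) *
        (∑ K ∈ Finset.range n, ((M+n+1+K).factorial : ℝ) * bell2 (n+1) (n-(r+1)) K x)
    = ∑ K ∈ Finset.range (n+1), (2*(n:ℝ)+3*(K:ℝ)) * ((M+n+K).factorial : ℝ) *
        bell2 (n+1) n K x := by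
  have hstep1 : ∑ r ∈ Finset.range n, (2*(r:ℝ)+5) * (n.choose (r+1) : ℝ) * x (r+1) *
        (∑ K ∈ Finset.range n, ((M+n+1+K).factorial : ℝ) * bell2 (n+1) (n-(r+1)) K x)
      = ∑ r ∈ Finset.range (n+1), (2*(r:ℝ)+5) * (n.choose (r+1) : ℝ) * x (r+1) *
        (∑ K ∈ Finset.range n, ((M+n+1+K).factorial : ℝ) * bell2 (n+1) (n-(r+1)) K x) := by
    rw [Finset.sum_range_succ, Nat.choose_succ_self]
    simp
  rw [hstep1, Finset.sum_range (fun r => (2*(r:ℝ)+5) * (n.choose (r+1) : ℝ) * x (r+1) *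
        (∑ K ∈ Finset.range n, ((M+n+1+K).factorial : ℝ) * bell2 (n+1) (n-(r+1)) K x))]
  have hstep2 : ∀ i : Fin (n+1), (2*((i:ℕ):ℝ)+5) * (n.choose ((i:ℕ)+1) : ℝ) * x ((i:ℕ)+1) *
        (∑ K ∈ Finset.range n, ((M+n+1+K).factorial : ℝ) * bell2 (n+1) (n-((i:ℕ)+1)) K x)
      = ∑ K ∈ Finset.range n, ((M+n+1+K).factorial : ℝ) *
          ((2*((i:ℕ):ℝ)+5) * (n.choose ((i:ℕ)+1) : ℝ) * x ((i:ℕ)+1) *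
            bell2 (n+1) (n-((i:ℕ)+1)) K x) := by
    intro i
    rw [Finset.mul_sum]
    exact Finset.sum_congr rfl fun K _ => by ring
  rw [Finset.sum_congr rfl (fun i _ => hstep2 i), Finset.sum_comm]
  have hstep3 : ∀ K ∈ Finset.range n,
      ∑ i : Fin (n+1), ((M+n+1+K).factorial : ℝ) *
          ((2*((i:ℕ):ℝ)+5) * (n.choose ((i:ℕ)+1) : ℝ) * x ((i:ℕ)+1) *
            bell2 (n+1) (n-((i:ℕ)+1)) K x)
      = (2*(n:ℝ)+3*((K:ℕ)+1:ℝ)) * (((M+n+(K+1)).factorial : ℝ)) * bell2 (n+1) n (K+1) x := by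
    intro K _
    rw [← Finset.mul_sum, keyK (n+1) n K x]
    have : (M+n+1+K) = (M+n+(K+1)) := by omega
    rw [this]
    push_cast
    ring
  rw [Finset.sum_congr rfl hstep3]
  rw [Finset.sum_range_succ' (fun K => (2*(n:ℝ)+3*(K:ℝ)) * ((M+n+K).factorial : ℝ) *
        bell2 (n+1) n K x) n]
  have h0 : (2*(n:ℝ)+3*((0:ℕ):ℝ)) * ((M+n+0).factorial : ℝ) * bell2 (n+1) n 0 x = 0 := by
    rcases Nat.eq_zero_or_pos n with h | h
    · subst h; norm_num
    · rw [bell2_n0 h]; ring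
  rw [h0, add_zero]
  apply Finset.sum_congr rfl
  intro K _
  push_cast
  ring

lemma main_red (n M : ℕ) (x : ℕ → ℝ) (hx0 : x 0 = -1) :
    ∑ j ∈ Finset.range (n+1), (2*(j:ℝ)+3) * (n.choose j : ℝ) * (-x j) *
        (∑ K ∈ Finset.range (n-j+1), ((M+n+1+K).factorial : ℝ) * bell2 (n+1) (n-j) K x)
    = (3*(M:ℝ)+(n:ℝ)+3) *
        ∑ K ∈ Finset.range (n+1), ((M+n+K).factorial : ℝ) * bell2 (n+1) n K x := by
  rw [Finset.sum_range_succ']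
  have hg : ∀ r ∈ Finset.range n,
      (2*((r+1:ℕ):ℝ)+3) * (n.choose (r+1) : ℝ) * (-x (r+1)) *
        (∑ K ∈ Finset.range (n-(r+1)+1), ((M+n+1+K).factorial : ℝ) * bell2 (n+1) (n-(r+1)) K x)
      = -((2*(r:ℝ)+5) * (n.choose (r+1) : ℝ) * x (r+1) *
        (∑ K ∈ Finset.range n, ((M+n+1+K).factorial : ℝ) * bell2 (n+1) (n-(r+1)) K x)) := by
    intro r hr
    have hrn : r < n := Finset.mem_range.mp hr
    have hinner : ∑ K ∈ Finset.range (n-(r+1)+1), ((M+n+1+K).factorial : ℝ) *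
          bell2 (n+1) (n-(r+1)) K x
        = ∑ K ∈ Finset.range n, ((M+n+1+K).factorial : ℝ) * bell2 (n+1) (n-(r+1)) K x := by
      apply Finset.sum_subset (Finset.range_subset_range.mpr (by omega))
      intro K hK hK'
      rw [Finset.mem_range] at hK hK'
      rw [bell2_eq_zero (by omega) x, mul_zero]
    rw [hinner]
    push_cast
    ring
  rw [Finset.sum_congr rfl hg, Finset.sum_neg_distrib, claimE n M x]
  have hf0 : (2*((0:ℕ):ℝ)+3) * (n.choose 0 : ℝ) * (-x 0) *
      (∑ K ∈ Finset.range (n-0+1), ((M+n+1+K).factorial : ℝ) * bell2 (n+1) (n-0) K x)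
      = ∑ K ∈ Finset.range (n+1), 3 * (((M+n+1+K).factorial : ℝ) * bell2 (n+1) n K x) := by
    rw [Nat.sub_zero, hx0, Finset.mul_sum]
    simp
  rw [hf0, Finset.mul_sum, ← Finset.sum_neg_distrib, ← Finset.sum_add_distrib]
  apply Finset.sum_congr rfl
  intro K _
  have h1 : (M+n+1+K) = (M+n+K)+1 := by omega
  rw [h1, Nat.factorial_succ]
  push_cast
  ring

end BA


namespace BA

lemma df_succ (j : ℕ) : df (j+1) = (2*(j:ℝ)+3) * df j := by
  rw [df, df]
  have h1 : 2*(j+1)+1 = ((2*j+1)+1)+1 := by ring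
  rw [h1, Nat.factorial_succ (2*j+1+1), Nat.factorial_succ (2*j+1), Nat.factorial_succ j, pow_succ]
  have h2 : ((j.factorial : ℝ)) ≠ 0 := by positivity
  have h3 : ((2:ℝ)^j) ≠ 0 := by positivity
  push_cast
  field_simp
  ring

lemma df_zero : df 0 = 1 := by norm_num [df]

lemma gam_eval (ρs : ℕ → ℝ) (B M' : ℕ) (h3 : 3 ≤ B) (hM : M' ≤ B - 3) :
    gam ρs B (M' : ℤ) = (ρs 0 ^ (B - 3))⁻¹ *
      ∑ K ∈ Finset.range (B - 3 - M' + 1),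
        ((B - 3 + K).factorial : ℝ) /
            (((B - 3 - M').factorial : ℝ) * (M'.factorial : ℝ)) *
          bellPoly (B - 3 - M') K (fun r => -(df r * ρs r) / ((r + 1) * ρs 0)) := by
  rw [gam, if_pos ⟨h3, Int.natCast_nonneg M', by omega⟩]
  simp

end BA

open BA in
/-- Recursion `Σ_{j=0}^{B−4−M} C(M+1+j,j+1)·(2j+3)!!·ρ_j·γ^{M+1+j}_B = (2M+B−1)·γ^M_{B−1}`
satisfied by the coefficients `γ^M_B` of the multi-boundary correlation functions. -/
theorem stmt_13 (ρs : ℕ → ℝ) (hρ : ρs 0 ≠ 0) (B M : ℕ) (hB : 4 ≤ B) (hM : M ≤ B - 4) :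
    ∑ j ∈ Finset.range (B - 4 - M + 1),
      (((M + 1 + j).choose (j + 1) : ℕ) : ℝ) * df (j + 1) * ρs j * gam ρs B ((M : ℤ) + 1 + j)
    = (2 * (M : ℝ) + B - 1) * gam ρs (B - 1) (M : ℤ) := by
  obtain ⟨n, rfl⟩ : ∃ n, B = M + n + 4 := ⟨B - 4 - M, by omega⟩
  set x : ℕ → ℝ := fun r => -(df r * ρs r) / ((r + 1) * ρs 0) with hxdef
  have hx0 : x 0 = -1 := by
    rw [hxdef]
    simp only [df_zero]
    norm_num
    rw [neg_div, div_self hρ]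
  set c : ℝ := ρs 0 * (ρs 0 ^ (M+n+1))⁻¹ * ((M.factorial : ℝ) * (n.factorial : ℝ))⁻¹ with hcdef
  have hr1 : M + n + 4 - 4 - M = n := by omega
  have hr2 : M + n + 4 - 1 = M + n + 3 := by omega
  rw [hr1, hr2, gam_eval ρs (M+n+3) M (by omega) (by omega)]
  rw [show M+n+3-3 = M+n from by omega, show M+n-M = n from by omega]
  have hRbell : ∑ K ∈ Finset.range (n+1),
        ((M+n+K).factorial : ℝ) / ((n.factorial : ℝ) * (M.factorial : ℝ)) * bellPoly n K x
      = ((n.factorial : ℝ) * (M.factorial : ℝ))⁻¹ *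
        ∑ K ∈ Finset.range (n+1), ((M+n+K).factorial : ℝ) * bell2 (n+1) n K x := by
    rw [Finset.mul_sum]
    exact Finset.sum_congr rfl fun K _ => by
      rw [bellPoly_eq_bell2 (L := n+1) (by omega) x]; ring
  rw [hRbell]
  have hLj : ∀ j ∈ Finset.range (n+1),
      (((M + 1 + j).choose (j + 1) : ℕ) : ℝ) * df (j + 1) * ρs j *
          gam ρs (M+n+4) ((M : ℤ) + 1 + j)
      = c * ((2*(j:ℝ)+3) * ((M+n+4-4-M).choose j : ℝ) * (-x j) *
          (∑ K ∈ Finset.range ((M+n+4-4-M)-j+1), ((M+(M+n+4-4-M)+1+K).factorial : ℝ) *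
            bell2 ((M+n+4-4-M)+1) ((M+n+4-4-M)-j) K x)) := by
    intro j hj
    have hjn : j ≤ n := by
      rw [Finset.mem_range] at hj; omega
    rw [hr1]
    have hcast : (M : ℤ) + 1 + j = ((M + 1 + j : ℕ) : ℤ) := by push_cast; ring
    rw [hcast, gam_eval ρs (M+n+4) (M+1+j) (by omega) (by omega)]
    rw [show M+n+4-3 = M+n+1 from by omega,
      show M+n+1-(M+1+j) = n-j from by omega]
    have hWj : ∑ K ∈ Finset.range (n-j+1),
          ((M+n+1+K).factorial : ℝ) /
            (((n-j).factorial : ℝ) * ((M+1+j).factorial : ℝ)) * bellPoly (n-j) K x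
        = (((n-j).factorial : ℝ) * ((M+1+j).factorial : ℝ))⁻¹ *
          ∑ K ∈ Finset.range (n-j+1), ((M+n+1+K).factorial : ℝ) * bell2 (n+1) (n-j) K x := by
      rw [Finset.mul_sum]
      exact Finset.sum_congr rfl fun K _ => by
        rw [bellPoly_eq_bell2 (L := n+1) (by omega) x]; ring
    rw [hWj]
    -- scalar identity
    have hch1 : (((M + 1 + j).choose (j + 1) : ℕ) : ℝ)
        = ((M+1+j).factorial : ℝ) / (((j+1).factorial : ℝ) * (M.factorial : ℝ)) := by
      rw [Nat.cast_choose ℝ (by omega : j+1 ≤ M+1+j), show M+1+j-(j+1) = M from by omega]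
    have hch2 : ((n.choose j : ℕ) : ℝ)
        = (n.factorial : ℝ) / ((j.factorial : ℝ) * ((n-j).factorial : ℝ)) :=
      Nat.cast_choose ℝ hjn
    have hxj : x j = -(df j * ρs j) / (((j:ℝ) + 1) * ρs 0) := rfl
    have hfj : (((j+1).factorial : ℕ) : ℝ) = ((j:ℝ)+1) * (j.factorial : ℝ) := by
      rw [Nat.factorial_succ]; push_cast; ring
    have hs : (((M + 1 + j).choose (j + 1) : ℕ) : ℝ) * df (j + 1) * ρs j *
          ((ρs 0 ^ (M+n+1))⁻¹ * (((n-j).factorial : ℝ) * ((M+1+j).factorial : ℝ))⁻¹)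
        = c * ((2*(j:ℝ)+3) * ((n.choose j : ℕ) : ℝ) * (-x j)) := by
      rw [hch1, hch2, hxj, df_succ, hcdef, hfj]
      have ne1 : ((M+1+j).factorial : ℝ) ≠ 0 := by positivity
      have ne2 : ((n-j).factorial : ℝ) ≠ 0 := by positivity
      have ne3 : (M.factorial : ℝ) ≠ 0 := by positivity
      have ne4 : (n.factorial : ℝ) ≠ 0 := by positivity
      have ne5 : (j.factorial : ℝ) ≠ 0 := by positivity
      have ne6 : ((j:ℝ)+1) ≠ 0 := by positivity
      have ne7 : (ρs 0 ^ (M+n+1)) ≠ 0 := pow_ne_zero _ hρ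
      field_simp
    linear_combination (∑ K ∈ Finset.range (n-j+1), ((M+n+1+K).factorial : ℝ) *
      bell2 (n+1) (n-j) K x) * hs
  rw [Finset.sum_congr rfl hLj, hr1, ← Finset.mul_sum,
    main_red n M x hx0]
  have hpow : (ρs 0 ^ (M+n))⁻¹ = ρs 0 * (ρs 0 ^ (M+n+1))⁻¹ := by
    rw [pow_succ]
    field_simp
  rw [hpow, hcdef]
  push_cast
  ring
end

section
/- Let (x_r)_{r≥1} be a sequence of reals and let f := Σ_{r≥1} (x_r/r!)·t^r ∈ ℝ[[t]] be the associated formal power series (with zero constant term, so 1−f is invertible in ℝ[[t]]). Then for all m, n ∈ ℕ: n!·m!·(the coefficient of t^n in (1−f)^{−(m+1)}) = Σ_{K=0}^{n} (m+K)!·B_{n,K}(x₁,…,x_{n−K+1}), where (1−f)^{−(m+1)} denotes the (m+1)-st power of the multiplicative inverse of 1−f in ℝ[[t]]. -/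
open Finset PowerSeries

lemma bell_step {R : Type*} [CommRing R] (y : R) (m N : ℕ) :
    (∑ K ∈ range (N + 1), ((m + 1 + K).choose K : R) * y ^ K) * (1 - y)
      = (∑ K ∈ range (N + 1), ((m + K).choose K : R) * y ^ K)
        - ((m + 1 + N).choose N : R) * y ^ (N + 1) := by
  induction N with
  | zero => simp
  | succ N ih =>
    rw [sum_range_succ, add_mul, ih, sum_range_succ (n := N + 1)]
    have h1 : (m + 1 + (N+1)).choose (N+1) = (m + 1 + N).choose N + (m + (N+1)).choose (N+1) := by
      have := Nat.choose_succ_succ (m + 1 + N) N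
      have h2 : m + 1 + (N + 1) = (m + 1 + N) + 1 := by omega
      have h3 : m + (N + 1) = m + 1 + N := by omega
      rw [h2, h3]
      simpa using this
    push_cast [h1]
    ring

lemma bell_key {R : Type*} [CommRing R] (y : R) (m N : ℕ) :
    ∃ g : R, (∑ K ∈ range (N + 1), ((m + K).choose K : R) * y ^ K) * (1 - y) ^ (m + 1)
      = 1 - y ^ (N + 1) * g := by
  induction m with
  | zero =>
    refine ⟨1, ?_⟩
    have h := geom_sum_mul y (N + 1)
    have h2 : (∑ K ∈ range (N + 1), ((0 + K).choose K : R) * y ^ K)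
        = ∑ K ∈ range (N + 1), y ^ K := by
      refine Finset.sum_congr rfl fun K _ => ?_
      simp [Nat.choose_self]
    rw [h2, pow_one]
    have : (∑ K ∈ range (N + 1), y ^ K) * (1 - y) = -((∑ i ∈ range (N + 1), y ^ i) * (y - 1)) := by ring
    rw [this, h]; ring
  | succ m ih =>
    obtain ⟨g, hg⟩ := ih
    refine ⟨g + ((m + 1 + N).choose N : R) * (1 - y) ^ (m + 1), ?_⟩
    have : (∑ K ∈ range (N + 1), ((m + 1 + K).choose K : R) * y ^ K) * (1 - y) ^ (m + 1 + 1)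
        = ((∑ K ∈ range (N + 1), ((m + 1 + K).choose K : R) * y ^ K) * (1 - y)) * (1 - y) ^ (m + 1) := by
      ring
    rw [this, bell_step, sub_mul, hg]
    ring

lemma coeff_inv_pow (c : ℕ → ℝ) (hc : c 0 = 0) (m n : ℕ) :
    PowerSeries.coeff (R := ℝ) n ((1 - PowerSeries.mk c)⁻¹ ^ (m + 1))
      = ∑ K ∈ range (n + 1), ((m + K).choose K : ℝ) * PowerSeries.coeff (R := ℝ) n ((PowerSeries.mk c) ^ K) := by
  set f : ℝ⟦X⟧ := PowerSeries.mk c with hf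
  have hX : (PowerSeries.X : ℝ⟦X⟧) ∣ f := by
    rw [PowerSeries.X_dvd_iff]; simpa [hf] using hc
  have hu : constantCoeff (R := ℝ) (1 - f) ≠ 0 := by
    have : constantCoeff (R := ℝ) f = 0 := by simpa [hf] using hc
    simp [this]
  have hinv : (1 - f) * (1 - f)⁻¹ = 1 := PowerSeries.mul_inv_cancel _ hu
  obtain ⟨g, hg⟩ := bell_key f m n
  have hmain : (∑ K ∈ range (n + 1), ((m + K).choose K : ℝ⟦X⟧) * f ^ K)
      = (1 - f)⁻¹ ^ (m + 1) - f ^ (n + 1) * (g * (1 - f)⁻¹ ^ (m + 1)) := by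
    have h1 : (1 - f) ^ (m + 1) * (1 - f)⁻¹ ^ (m + 1) = 1 := by
      rw [← mul_pow, hinv, one_pow]
    calc (∑ K ∈ range (n + 1), ((m + K).choose K : ℝ⟦X⟧) * f ^ K)
        = (∑ K ∈ range (n + 1), ((m + K).choose K : ℝ⟦X⟧) * f ^ K)
            * ((1 - f) ^ (m + 1) * (1 - f)⁻¹ ^ (m + 1)) := by rw [h1, mul_one]
      _ = ((∑ K ∈ range (n + 1), ((m + K).choose K : ℝ⟦X⟧) * f ^ K) * (1 - f) ^ (m + 1))
            * (1 - f)⁻¹ ^ (m + 1) := by ring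
      _ = (1 - f ^ (n + 1) * g) * (1 - f)⁻¹ ^ (m + 1) := by rw [hg]
      _ = (1 - f)⁻¹ ^ (m + 1) - f ^ (n + 1) * (g * (1 - f)⁻¹ ^ (m + 1)) := by ring
  have hz : PowerSeries.coeff (R := ℝ) n (f ^ (n + 1) * (g * (1 - f)⁻¹ ^ (m + 1))) = 0 := by
    have : (PowerSeries.X : ℝ⟦X⟧) ^ (n + 1) ∣ f ^ (n + 1) * (g * (1 - f)⁻¹ ^ (m + 1)) :=
      Dvd.dvd.mul_right (pow_dvd_pow_of_dvd hX (n + 1)) _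
    exact (PowerSeries.X_pow_dvd_iff.mp this) n (lt_add_one n)
  have := congrArg (PowerSeries.coeff (R := ℝ) n) hmain
  rw [map_sub, hz, sub_zero, map_sum] at this
  rw [← this]
  refine Finset.sum_congr rfl fun K _ => ?_
  rw [← map_natCast (PowerSeries.C (R := ℝ)) ((m + K).choose K), PowerSeries.coeff_C_mul]

lemma coeff_pow_congr (A B : ℝ⟦X⟧) (n : ℕ) (h : ∀ i ≤ n, PowerSeries.coeff (R := ℝ) i A = PowerSeries.coeff (R := ℝ) i B)
    (K : ℕ) : ∀ j ≤ n, PowerSeries.coeff (R := ℝ) j (A ^ K) = PowerSeries.coeff (R := ℝ) j (B ^ K) := by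
  induction K with
  | zero => intro j _; simp
  | succ K ih =>
    intro j hj
    rw [pow_succ, pow_succ, PowerSeries.coeff_mul, PowerSeries.coeff_mul]
    refine Finset.sum_congr rfl fun p hp => ?_
    rw [Finset.HasAntidiagonal.mem_antidiagonal] at hp
    rw [ih p.1 (by omega), h p.2 (by omega)]

lemma coeff_f_pow (c : ℕ → ℝ) (n K : ℕ) :
    PowerSeries.coeff (R := ℝ) n ((PowerSeries.mk c) ^ K)
      = ∑ k ∈ (piAntidiag (range (n + 1)) K).filter
          (fun k => ∑ r ∈ range (n + 1), r * k r = n),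
          (Nat.multinomial (range (n + 1)) k : ℝ) * ∏ r ∈ range (n + 1), c r ^ k r := by
  set B : ℝ⟦X⟧ := ∑ r ∈ range (n + 1), PowerSeries.C (R := ℝ) (c r) * PowerSeries.X ^ r with hB
  have hagree : ∀ i ≤ n, PowerSeries.coeff (R := ℝ) i (PowerSeries.mk c) = PowerSeries.coeff (R := ℝ) i B := by
    intro i hi
    rw [hB, map_sum]
    rw [PowerSeries.coeff_mk]
    rw [Finset.sum_eq_single i]
    · simp [PowerSeries.coeff_C_mul, PowerSeries.coeff_X_pow]
    · intro b _ hb; simp [PowerSeries.coeff_C_mul, PowerSeries.coeff_X_pow, Ne.symm hb]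
    · intro hi'; exact absurd (Finset.mem_range.mpr (by omega)) hi'
  rw [coeff_pow_congr _ _ n hagree K n le_rfl]
  have hBpow : B ^ K = ∑ k ∈ piAntidiag (range (n + 1)) K,
      (Nat.multinomial (range (n + 1)) k : ℝ⟦X⟧)
        * (PowerSeries.C (R := ℝ) (∏ r ∈ range (n + 1), c r ^ k r)
            * PowerSeries.X ^ (∑ r ∈ range (n + 1), r * k r)) := by
    rw [hB, Finset.sum_pow_eq_sum_piAntidiag]
    refine Finset.sum_congr rfl fun k _ => ?_
    congr 1
    rw [map_prod, ← Finset.prod_pow_eq_pow_sum, ← Finset.prod_mul_distrib]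
    refine Finset.prod_congr rfl fun r _ => ?_
    rw [mul_pow, ← map_pow, ← pow_mul]
  rw [hBpow, map_sum, Finset.sum_filter]
  refine Finset.sum_congr rfl fun k _ => ?_
  rw [← map_natCast (PowerSeries.C (R := ℝ)) (Nat.multinomial (range (n + 1)) k), PowerSeries.coeff_C_mul,
    PowerSeries.coeff_C_mul, PowerSeries.coeff_X_pow]
  by_cases h : ∑ r ∈ range (n + 1), r * k r = n <;> simp [h, Ne.symm]

/-- Expand a tuple `j : Fin d → ℕ` to a function `ℕ → ℕ` supported on `[1, d]`. -/
def Fmap (d : ℕ) (j : Fin d → ℕ) : ℕ → ℕ := fun r =>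
  if h : 0 < r ∧ r ≤ d then j ⟨r - 1, by omega⟩ else 0

lemma Fmap_reindex {M : Type*} [CommMonoid M] {n d : ℕ} (hdn : d ≤ n)
    (j : Fin d → ℕ) (h : ℕ → ℕ → M) (h0 : ∀ r, h r 0 = 1) :
    ∏ r ∈ range (n + 1), h r (Fmap d j r)
      = ∏ i : Fin d, h ((i : ℕ) + 1) (j i) := by
  have hsub : Icc 1 d ⊆ range (n + 1) := by
    intro r hr; rw [mem_Icc] at hr; rw [mem_range]; omega
  have h1 : ∏ r ∈ range (n + 1), h r (Fmap d j r) = ∏ r ∈ Icc 1 d, h r (Fmap d j r) := by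
    refine (Finset.prod_subset hsub fun r _ hr => ?_).symm
    rw [mem_Icc] at hr
    have : Fmap d j r = 0 := by rw [Fmap, dif_neg]; omega
    rw [this, h0]
  have h2 : ∏ r ∈ Icc 1 d, h r (Fmap d j r) = ∏ r ∈ range d, h (1 + r) (Fmap d j (1 + r)) := by
    have : Icc 1 d = Ico 1 (d + 1) := by ext r; simp [Nat.lt_succ_iff]
    rw [this, Finset.prod_Ico_eq_prod_range]
    simp
  rw [h1, h2, Finset.prod_range]
  refine Fintype.prod_congr _ _ fun i => ?_
  have hi : 0 < 1 + (i : ℕ) ∧ 1 + (i : ℕ) ≤ d := ⟨by omega, by omega⟩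
  rw [Fmap, dif_pos hi]
  have : (⟨1 + (i : ℕ) - 1, by omega⟩ : Fin d) = i := by ext; simp
  rw [this, add_comm 1 (i : ℕ)]

lemma Fmap_reindex_sum {n d : ℕ} (hdn : d ≤ n)
    (j : Fin d → ℕ) (h : ℕ → ℕ → ℕ) (h0 : ∀ r, h r 0 = 0) :
    ∑ r ∈ range (n + 1), h r (Fmap d j r)
      = ∑ i : Fin d, h ((i : ℕ) + 1) (j i) := by
  have := Fmap_reindex (M := Multiplicative ℕ) hdn j
    (fun r v => Multiplicative.ofAdd (h r v)) (fun r => by simp [h0 r])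
  simpa [← ofAdd_sum] using this

lemma supp_bound {n K : ℕ} (k : ℕ → ℕ)
    (hsum : ∑ r ∈ range (n + 1), k r = K)
    (hw : ∑ r ∈ range (n + 1), r * k r = n)
    (hsupp : ∀ r, k r ≠ 0 → r ∈ range (n + 1))
    (hpos : ∀ r, k r ≠ 0 → 1 ≤ r) :
    ∀ r, n - K + 1 < r → k r = 0 := by
  intro r hr
  by_contra h
  have hrn : r ∈ range (n + 1) := hsupp r h
  rw [mem_range] at hrn
  have hdec : ∀ t ∈ range (n + 1), t * k t = k t + (t - 1) * k t := by
    intro t _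
    rcases Nat.eq_zero_or_pos (k t) with h0 | h0
    · simp [h0]
    · have h1 : 1 ≤ t := hpos t (by omega)
      obtain ⟨s, rfl⟩ := Nat.exists_eq_add_of_le h1
      simp [Nat.add_sub_cancel_left]
      ring
  rw [Finset.sum_congr rfl hdec, Finset.sum_add_distrib, hsum] at hw
  have hle : (r - 1) * k r ≤ ∑ t ∈ range (n + 1), (t - 1) * k t :=
    Finset.single_le_sum (f := fun t => (t - 1) * k t) (fun t _ => Nat.zero_le _) (mem_range.mpr hrn)
  have hge : r - 1 ≤ (r - 1) * k r := Nat.le_mul_of_pos_right _ (by omega)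
  omega

lemma sum_eq (x : ℕ → ℝ) (n K : ℕ) (hK : 1 ≤ K) (hKn : K ≤ n) (c : ℕ → ℝ)
    (hc0 : c 0 = 0) (hcs : ∀ r, r ≠ 0 → c r = x r / r.factorial) :
    ∑ k ∈ (piAntidiag (range (n + 1)) K).filter
        (fun k => ∑ r ∈ range (n + 1), r * k r = n),
      (Nat.multinomial (range (n + 1)) k : ℝ)
        * ∏ r ∈ range (n + 1), c r ^ k r
    = ∑ j ∈ (Finset.Nat.antidiagonalTuple (n - K + 1) K).filter
        (fun j : Fin (n - K + 1) → ℕ => ∑ i : Fin (n - K + 1), ((i : ℕ) + 1) * j i = n),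
      (K.factorial : ℝ) / (∏ i : Fin (n - K + 1), ((j i).factorial : ℝ)) *
        ∏ i : Fin (n - K + 1), (x ((i : ℕ) + 1) / (((i : ℕ) + 1).factorial : ℝ)) ^ (j i) := by
  classical
  set d := n - K + 1 with hd
  have hdn : d ≤ n := by omega
  set A := (piAntidiag (range (n + 1)) K).filter
      (fun k => ∑ r ∈ range (n + 1), r * k r = n) with hA
  set A' := A.filter (fun k => ∀ r, k r ≠ 0 → 1 ≤ r) with hA'
  -- restrict to positive support
  have step1 : ∑ k ∈ A, (Nat.multinomial (range (n + 1)) k : ℝ) * ∏ r ∈ range (n + 1), c r ^ k r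
      = ∑ k ∈ A', (Nat.multinomial (range (n + 1)) k : ℝ) * ∏ r ∈ range (n + 1), c r ^ k r := by
    refine (Finset.sum_subset (Finset.filter_subset _ _) ?_).symm
    intro k hk hk'
    have h0 : k 0 ≠ 0 := by
      by_contra h
      refine hk' (Finset.mem_filter.mpr ⟨hk, fun r hr => ?_⟩)
      rcases Nat.eq_zero_or_pos r with h1 | h1
      · exact absurd (h1 ▸ hr) (by simp [h])
      · exact h1
    have : ∏ r ∈ range (n + 1), c r ^ k r = 0 := by
      refine Finset.prod_eq_zero (i := 0) (Finset.mem_range.mpr (by omega)) ?_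
      rw [hc0, zero_pow h0]
    rw [this, mul_zero]
  rw [step1]
  -- bijection
  refine (Finset.sum_nbij' (i := fun j : Fin d → ℕ => Fmap d j)
    (j := fun (k : ℕ → ℕ) (i : Fin d) => k ((i : ℕ) + 1)) ?_ ?_ ?_ ?_ ?_).symm
  · -- hi : ∀ j ∈ S₁, Fmap d j ∈ A'
    intro j hj
    rw [Finset.mem_filter, Finset.Nat.mem_antidiagonalTuple] at hj
    obtain ⟨hsum, hw⟩ := hj
    rw [hA', Finset.mem_filter, hA, Finset.mem_filter, mem_piAntidiag]
    refine ⟨⟨⟨?_, ?_⟩, ?_⟩, ?_⟩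
    · rw [Fmap_reindex_sum hdn j (fun r v => v) (fun _ => rfl)]; exact hsum
    · intro r hr
      simp only [Fmap] at hr
      rw [mem_range]
      by_contra h
      exact hr (dif_neg (by omega))
    · rw [Fmap_reindex_sum hdn j (fun r v => r * v) (fun r => by simp)]; exact hw
    · intro r hr
      simp only [Fmap] at hr
      by_contra h
      exact hr (dif_neg (by omega))
  · -- hj : ∀ k ∈ A', G k ∈ S₁
    intro k hk
    rw [hA', Finset.mem_filter, hA, Finset.mem_filter, mem_piAntidiag] at hk
    obtain ⟨⟨⟨hsum, hsupp⟩, hw⟩, hpos⟩ := hk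
    have hFG : Fmap d (fun i : Fin d => k ((i : ℕ) + 1)) = k := by
      funext r
      simp only [Fmap]
      split_ifs with h
      · show k (r - 1 + 1) = k r
        congr 1; omega
      · symm
        rcases Nat.eq_zero_or_pos r with h1 | h1
        · by_contra h2; exact absurd (hpos r h2) (by omega)
        · exact supp_bound k hsum hw hsupp hpos r (by omega)
    rw [Finset.mem_filter, Finset.Nat.mem_antidiagonalTuple]
    constructor
    · rw [← Fmap_reindex_sum hdn _ (fun r v => v) (fun _ => rfl), hFG]; exact hsum
    · rw [← Fmap_reindex_sum hdn _ (fun r v => r * v) (fun r => by simp), hFG]; exact hw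
  · -- left inverse
    intro j hj
    funext i
    simp only [Fmap]
    rw [dif_pos ⟨Nat.succ_pos _, Nat.succ_le_of_lt i.isLt⟩]
    exact congrArg j (Fin.ext (by simp))
  · -- right inverse
    intro k hk
    rw [hA', Finset.mem_filter, hA, Finset.mem_filter, mem_piAntidiag] at hk
    obtain ⟨⟨⟨hsum, hsupp⟩, hw⟩, hpos⟩ := hk
    funext r
    simp only [Fmap]
    split_ifs with h
    · show k (r - 1 + 1) = k r
      congr 1; omega
    · symm
      rcases Nat.eq_zero_or_pos r with h1 | h1
      · by_contra h2; exact absurd (hpos r h2) (by omega)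
      · exact supp_bound k hsum hw hsupp hpos r (by omega)
  · -- terms
    intro j hj
    rw [Finset.mem_filter, Finset.Nat.mem_antidiagonalTuple] at hj
    obtain ⟨hsum, _⟩ := hj
    have hprod : ∏ r ∈ range (n + 1), c r ^ (Fmap d j r)
        = ∏ i : Fin d, (x ((i : ℕ) + 1) / (((i : ℕ) + 1).factorial : ℝ)) ^ (j i) := by
      rw [Fmap_reindex hdn j (fun r v => c r ^ v) (fun r => pow_zero _)]
      exact Fintype.prod_congr _ _ fun i => by rw [hcs _ (Nat.succ_ne_zero _)]
    have hfac : ∏ r ∈ range (n + 1), (Fmap d j r).factorial = ∏ i : Fin d, (j i).factorial :=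
      Fmap_reindex hdn j (fun r v => v.factorial) (fun _ => rfl)
    have hmult : (Nat.multinomial (range (n + 1)) (Fmap d j) : ℝ)
        = (K.factorial : ℝ) / (∏ i : Fin d, ((j i).factorial : ℝ)) := by
      have spec := Nat.multinomial_spec (range (n + 1)) (Fmap d j)
      rw [hfac, Fmap_reindex_sum hdn j (fun r v => v) (fun _ => rfl), hsum] at spec
      have hne : (∏ i : Fin d, ((j i).factorial : ℝ)) ≠ 0 :=
        Finset.prod_ne_zero_iff.mpr fun i _ => Nat.cast_ne_zero.mpr (Nat.factorial_ne_zero _)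
      rw [eq_div_iff hne, mul_comm]
      rw [← Nat.cast_prod, ← Nat.cast_mul, spec]
    rw [hmult, hprod]

lemma bellPoly_zero (n : ℕ) (x : ℕ → ℝ) : bellPoly n 0 x = if n = 0 then 1 else 0 := by
  rw [bellPoly, Finset.Nat.antidiagonalTuple_zero_right, Finset.filter_singleton]
  by_cases hn : n = 0
  · subst hn
    norm_num
  · rw [if_neg (by simpa using Ne.symm hn), if_neg hn, Finset.sum_empty]

/-- Generating-function identity for partial Bell polynomials: with
`f = Σ_{r≥1}(x_r/r!)t^r ∈ ℝ[[t]]`, for all `m, n ∈ ℕ`: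
`n!·m!·[t^n](1−f)^{−(m+1)} = Σ_{K=0}^{n}(m+K)!·B_{n,K}(x₁,…,x_{n−K+1})`. -/
theorem stmt_15 (x : ℕ → ℝ) (m n : ℕ) :
    (n.factorial : ℝ) * (m.factorial : ℝ) *
      PowerSeries.coeff (R := ℝ) n
        ((1 - PowerSeries.mk (fun r => if r = 0 then 0 else x r / (r.factorial : ℝ)))⁻¹ ^ (m + 1))
    = ∑ K ∈ Finset.range (n + 1), (((m + K).factorial : ℕ) : ℝ) * bellPoly n K x := by
  set c : ℕ → ℝ := fun r => if r = 0 then 0 else x r / (r.factorial : ℝ) with hc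
  rw [coeff_inv_pow c (by simp [hc]) m n, Finset.mul_sum]
  refine Finset.sum_congr rfl fun K hK => ?_
  rw [Finset.mem_range] at hK
  have hfact : ((m.factorial : ℝ)) * (((m + K).choose K : ℕ) : ℝ) * (K.factorial : ℝ)
      = (((m + K).factorial : ℕ) : ℝ) := by
    have h := Nat.choose_mul_factorial_mul_factorial (n := m + K) (k := K) (Nat.le_add_left K m)
    rw [Nat.add_sub_cancel] at h
    push_cast [← h]
    ring
  rcases Nat.eq_zero_or_pos K with rfl | hK1
  · rw [bellPoly_zero]
    simp only [pow_zero, map_one, PowerSeries.coeff_one]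
    rcases eq_or_ne n 0 with rfl | hn
    · simp
    · simp [hn]
  · have hKn : K ≤ n := by omega
    rw [coeff_f_pow c n K]
    rw [sum_eq x n K hK1 hKn c (by simp [hc]) (fun r hr => by simp [hc, hr])]
    rw [bellPoly]
    simp only [Finset.mul_sum]
    refine Finset.sum_congr rfl fun j _ => ?_
    rw [← hfact]
    ring
end
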